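/- arXiv:math/0311496 — 2 statements merged into one kernel-verified Lean document; each statement's English description precedes it below -/
import Mathlib

section
/- Let f : ℤ → ℤ be a finitely supported function whose total sum Σᵢ f(i) is odd. Then there is at most one integer c such that f(c + i) ≡ f(c - i) (mod 2) for all i ∈ ℤ. -/
theorem unique_symmetry_point_of_odd_total_sum (f : ℤ →₀ ℤ)
    (hodd : Odd (f.sum fun _ v => v)) (c d : ℤ)
    (hc : ∀ i : ℤ, f (c + i) ≡ f (c - i) [ZMOD 2])
    (hd : ∀ i : ℤ, f (d + i) ≡ f (d - i) [ZMOD 2]) :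
    c = d := by
  by_contra hne
  set p : ℤ := 2 * (d - c) with hp
  have hp0 : p ≠ 0 := by
    intro h
    apply hne
    omega
  -- symmetry in ZMod 2 form
  have hc' : ∀ x : ℤ, ((f x : ZMod 2)) = f (2 * c - x) := by
    intro x
    have := (ZMod.intCast_eq_intCast_iff _ _ _).mpr (hc (x - c))
    simpa [show c + (x - c) = x by ring, show c - (x - c) = 2 * c - x by ring] using this
  have hd' : ∀ x : ℤ, ((f x : ZMod 2)) = f (2 * d - x) := by
    intro x
    have := (ZMod.intCast_eq_intCast_iff _ _ _).mpr (hd (x - d))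
    simpa [show d + (x - d) = x by ring, show d - (x - d) = 2 * d - x by ring] using this
  have hper : ∀ x : ℤ, ((f x : ZMod 2)) = f (x + p) := by
    intro x
    rw [hc' x, hd' (2 * c - x)]
    congr 1
    rw [hp]; congr 1; ring
  have hpern : ∀ (n : ℕ) (x : ℤ), ((f x : ZMod 2)) = f (x + n * p) := by
    intro n
    induction n with
    | zero => simp
    | succ k ih =>
      intro x
      rw [ih x, hper (x + k * p)]
      congr 1
      push_cast
      ring
  -- there exists x with f x odd
  have hx : ∃ x : ℤ, (f x : ZMod 2) ≠ 0 := by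
    by_contra h
    push_neg at h
    have : ((f.sum fun _ v => v : ℤ) : ZMod 2) = 0 := by
      rw [Finsupp.sum, Int.cast_sum]
      exact Finset.sum_eq_zero fun i _ => h i
    rw [ZMod.intCast_zmod_eq_zero_iff_dvd] at this
    rw [Int.odd_iff] at hodd
    omega
  obtain ⟨x, hxne⟩ := hx
  -- infinitely many support elements
  have hmem : ∀ n : ℕ, x + n * p ∈ f.support := by
    intro n
    simp only [Finsupp.mem_support_iff]
    intro h0
    apply hxne
    rw [hpern n x, h0]
    simp
  have hinj : Function.Injective (fun n : ℕ => x + n * p) := by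
    intro a b hab
    simp only at hab
    have : (a : ℤ) = b := by
      have := mul_right_cancel₀ hp0 (by linarith : (a : ℤ) * p = b * p)
      exact this
    exact_mod_cast this
  have : (f.support : Set ℤ).Infinite :=
    Set.infinite_of_injective_forall_mem hinj (fun n => hmem n)
  exact this (f.support.finite_toSet)
end

section
/- Every unit of the group algebra ℤ[ℝ] is of the form ± Tʳ for some r ∈ ℝ, i.e. the units of AddMonoidAlgebra ℤ ℝ are exactly the elements ±1 times a single monomial with coefficient 1. -/
open Finsupp AddMonoidAlgebra

lemma mul_apply_max' (p q : AddMonoidAlgebra ℤ ℝ)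
    (hp : p.coeff.support.Nonempty) (hq : q.coeff.support.Nonempty) :
    (p * q).coeff (p.coeff.support.max' hp + q.coeff.support.max' hq) =
      p.coeff (p.coeff.support.max' hp) * q.coeff (q.coeff.support.max' hq) := by
  classical
  set a := p.coeff.support.max' hp with ha
  set b := q.coeff.support.max' hq with hb
  rw [AddMonoidAlgebra.coeff_mul]
  simp_rw [Finsupp.sum]
  rw [Finset.sum_eq_single a, Finset.sum_eq_single b, if_pos rfl]
  · intro b' hb' hne
    refine if_neg fun he => hne ?_
    have : b' ≤ b := Finset.le_max' _ _ hb'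
    linarith [(add_left_cancel he : b' = b)]
  · intro h
    rw [if_pos rfl, Finsupp.notMem_support_iff.1 h, mul_zero]
  · intro a' ha' hne
    refine Finset.sum_eq_zero fun b' hb' => if_neg fun he => ?_
    have h1 : a' ≤ a := Finset.le_max' _ _ ha'
    have h2 : b' ≤ b := Finset.le_max' _ _ hb'
    have h3 : a' < a := lt_of_le_of_ne h1 hne
    linarith
  · intro h
    exact Finset.sum_eq_zero fun b' _ => by
      rw [Finsupp.notMem_support_iff.1 h, zero_mul, ite_self]

lemma mul_apply_min' (p q : AddMonoidAlgebra ℤ ℝ)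
    (hp : p.coeff.support.Nonempty) (hq : q.coeff.support.Nonempty) :
    (p * q).coeff (p.coeff.support.min' hp + q.coeff.support.min' hq) =
      p.coeff (p.coeff.support.min' hp) * q.coeff (q.coeff.support.min' hq) := by
  classical
  set a := p.coeff.support.min' hp with ha
  set b := q.coeff.support.min' hq with hb
  rw [AddMonoidAlgebra.coeff_mul]
  simp_rw [Finsupp.sum]
  rw [Finset.sum_eq_single a, Finset.sum_eq_single b, if_pos rfl]
  · intro b' hb' hne
    refine if_neg fun he => hne ?_
    have : b ≤ b' := Finset.min'_le _ _ hb'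
    linarith [(add_left_cancel he : b' = b)]
  · intro h
    rw [if_pos rfl, Finsupp.notMem_support_iff.1 h, mul_zero]
  · intro a' ha' hne
    refine Finset.sum_eq_zero fun b' hb' => if_neg fun he => ?_
    have h1 : a ≤ a' := Finset.min'_le _ _ ha'
    have h2 : b ≤ b' := Finset.min'_le _ _ hb'
    have h3 : a < a' := lt_of_le_of_ne h1 (Ne.symm hne)
    linarith
  · intro h
    exact Finset.sum_eq_zero fun b' _ => by
      rw [Finsupp.notMem_support_iff.1 h, zero_mul, ite_self]

theorem units_of_groupAlgebra_int_real (u : (AddMonoidAlgebra ℤ ℝ)ˣ) :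
    ∃ r : ℝ, (u : AddMonoidAlgebra ℤ ℝ) = AddMonoidAlgebra.single r 1 ∨
      (u : AddMonoidAlgebra ℤ ℝ) = -AddMonoidAlgebra.single r 1 := by
  classical
  set p : AddMonoidAlgebra ℤ ℝ := (u : AddMonoidAlgebra ℤ ℝ) with hpdef
  set q : AddMonoidAlgebra ℤ ℝ := ((u⁻¹ : (AddMonoidAlgebra ℤ ℝ)ˣ) : AddMonoidAlgebra ℤ ℝ)
    with hqdef
  have hpq : p * q = 1 := u.mul_inv
  have hp0 : p ≠ 0 := Units.ne_zero u
  have hq0 : q ≠ 0 := Units.ne_zero u⁻¹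
  have hp : p.coeff.support.Nonempty := Finsupp.support_nonempty_iff.2 (mt AddMonoidAlgebra.coeff_eq_zero.1 hp0)
  have hq : q.coeff.support.Nonempty := Finsupp.support_nonempty_iff.2 (mt AddMonoidAlgebra.coeff_eq_zero.1 hq0)
  have hone : (1 : AddMonoidAlgebra ℤ ℝ).coeff.support = {0} := by
    rw [AddMonoidAlgebra.one_def, AddMonoidAlgebra.coeff_single, Finsupp.support_single_ne_zero _ one_ne_zero]
  -- max degrees add to 0
  have hmaxmem : p.coeff.support.max' hp + q.coeff.support.max' hq ∈ (p * q).coeff.support := by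
    rw [Finsupp.mem_support_iff, mul_apply_max' p q hp hq]
    exact mul_ne_zero (Finsupp.mem_support_iff.1 (p.coeff.support.max'_mem hp))
      (Finsupp.mem_support_iff.1 (q.coeff.support.max'_mem hq))
  have hminmem : p.coeff.support.min' hp + q.coeff.support.min' hq ∈ (p * q).coeff.support := by
    rw [Finsupp.mem_support_iff, mul_apply_min' p q hp hq]
    exact mul_ne_zero (Finsupp.mem_support_iff.1 (p.coeff.support.min'_mem hp))
      (Finsupp.mem_support_iff.1 (q.coeff.support.min'_mem hq))
  rw [hpq, hone, Finset.mem_singleton] at hmaxmem hminmem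
  have h1 : p.coeff.support.min' hp ≤ p.coeff.support.max' hp := Finset.min'_le _ _ (p.coeff.support.max'_mem hp)
  have h2 : q.coeff.support.min' hq ≤ q.coeff.support.max' hq := Finset.min'_le _ _ (q.coeff.support.max'_mem hq)
  have hkey : p.coeff.support.min' hp = p.coeff.support.max' hp := by linarith
  set A := p.coeff.support.max' hp with hA
  -- support of p is {A}
  have hsupp : p.coeff.support ⊆ {A} := by
    intro x hx
    rw [Finset.mem_singleton]
    have := Finset.min'_le _ _ hx
    have := Finset.le_max' _ _ hx
    rw [hkey] at *
    linarith
  have hpsingle : p = AddMonoidAlgebra.single A (p.coeff A) :=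
    AddMonoidAlgebra.coeff_injective ((Finsupp.eq_single_iff).2 ⟨hsupp, rfl⟩)
  -- coefficient is a unit in ℤ
  have hc : p.coeff A * q.coeff (-A + 0) = 1 := by
    calc p.coeff A * q.coeff (-A + 0)
        = (AddMonoidAlgebra.single A (p.coeff A) * q).coeff 0 :=
          (AddMonoidAlgebra.coeff_single_mul_apply _ _ _ _).symm
      _ = (p * q).coeff 0 := by rw [← hpsingle]
      _ = (1 : AddMonoidAlgebra ℤ ℝ).coeff 0 := by rw [hpq]
      _ = 1 := by
          rw [AddMonoidAlgebra.one_def, AddMonoidAlgebra.coeff_single, Finsupp.single_eq_same]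
  have hunit : IsUnit (p.coeff A) := IsUnit.of_mul_eq_one _ hc
  rcases Int.isUnit_iff.1 hunit with h | h
  · exact ⟨A, Or.inl (by rw [hpsingle, h])⟩
  · refine ⟨A, Or.inr ?_⟩
    rw [hpsingle, h]
    simp [AddMonoidAlgebra.single_neg]
end
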